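/- arXiv:2304.13248 — 3 statements merged into one kernel-verified Lean document; each statement's English description precedes it below -/
import Mathlib

section
/- For the generalized Hermite sequence p_0 = 1, p_1 = t − b, p_{n+1} = (t − b)p_n − a n p_{n−1} (a ≠ 0), the linearization coefficients d(n,m,k) defined by p_n p_m = ∑_k d(n,m,k) p_k satisfy d(n,m,0) = δ_{n,m} · n! · a^n, and more generally the matrix A^{(k)} with entries d(n,m,k) equals (1/k!) ∑_{j=0}^{k} (k choose j) D^j A D̂^{k−j}, where A = Diag(1, a, 2! a², 3! a³, …), D is the matrix with D_{k+1,k} = k+1, and D̂ is its transpose. Equivalently, d(n,m,k) = (n! m! a^{(n+m−k)/2}) / (((n+k−m)/2)! ((m+k−n)/2)! ((n+m−k)/2)!) when n+m−k is even, nonnegative, and k ≥ |n−m|, and 0 otherwise. -/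
open scoped BigOperators

/-- Product of infinite matrices; the sum is a `tsum`, which reduces to a finite
sum for the banded matrices considered here. -/
noncomputable def matMul (A B : ℕ → ℕ → ℂ) : ℕ → ℕ → ℂ :=
  fun i k => ∑' j, A i j * B j k

noncomputable def matPow (A : ℕ → ℕ → ℂ) : ℕ → ℕ → ℕ → ℂ
  | 0 => fun i k => if i = k then 1 else 0
  | n + 1 => matMul (matPow A n) A

/-- Substitution of a matrix into a polynomial. -/
noncomputable def matPolyEval (w : Polynomial ℂ) (A : ℕ → ℕ → ℂ) : ℕ → ℕ → ℂ :=
  fun i k => ∑ m ∈ Finset.range (w.natDegree + 1), w.coeff m * matPow A m i k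

/-- The shift matrix `X`, with `X_{j,j+1} = 1`. -/
def Xmat : ℕ → ℕ → ℂ := fun i k => if k = i + 1 then 1 else 0

/-- The transpose `X̂` of the shift matrix. -/
def XhatMat : ℕ → ℕ → ℂ := fun i k => if i = k + 1 then 1 else 0

/-- The identity matrix. -/
def Imat : ℕ → ℕ → ℂ := fun i k => if i = k then 1 else 0

/-- The polynomial given by row `k` of a lower triangular matrix. -/
noncomputable def rowPoly (M : ℕ → ℕ → ℂ) (k : ℕ) : Polynomial ℂ :=
  ∑ j ∈ Finset.range (k + 1), Polynomial.C (M k j) * Polynomial.X ^ j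

/-- The differentiation matrix `D`, with `D_{k+1,k} = k+1`. -/
def Dmat : ℕ → ℕ → ℂ := fun i k => if i = k + 1 then (i : ℂ) else 0

/-- The transpose of the differentiation matrix, `D̂_{k,k+1} = k+1`. -/
def DhatMat : ℕ → ℕ → ℂ := fun i k => if k = i + 1 then (k : ℂ) else 0



noncomputable def ecoef (a : ℂ) (n m k : ℕ) : ℂ :=
  if (n + m - k) % 2 = 0 ∧ k ≤ n + m then
    ((n.choose ((n + m - k) / 2) * m.choose ((n + m - k) / 2) *
      ((n + m - k) / 2).factorial : ℕ) : ℂ) * a ^ ((n + m - k) / 2)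
  else 0

lemma ecoef_zero (a : ℂ) {n m k : ℕ} (h : n + m < k) : ecoef a n m k = 0 := by
  rw [ecoef, if_neg]; rintro ⟨-, h2⟩; omega

lemma natkey (n m l k : ℕ) (hk : k + 2 * l = n + m + 2) (hl : 1 ≤ l) :
    (n+2).choose l * m.choose l * l.factorial
      + (n+1) * (n.choose (l-1) * m.choose (l-1) * (l-1).factorial)
    = (n+1).choose l * m.choose l * l.factorial
      + (k+1) * ((n+1).choose (l-1) * m.choose (l-1) * (l-1).factorial) := by
  obtain ⟨l', rfl⟩ : ∃ l', l = l' + 1 := ⟨l - 1, by omega⟩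
  simp only [Nat.add_sub_cancel]
  by_cases hm : l' ≤ m
  · by_cases hn : l' ≤ n + 1
    · have h1 : m.choose (l' + 1) * (l' + 1) = m.choose l' * (m - l') :=
        Nat.choose_succ_right_eq m l'
      have h2 : (n + 1) * n.choose l' = (n+1).choose (l'+1) * (l'+1) :=
        Nat.add_one_mul_choose_eq n l'
      have h3 : (n+1).choose (l'+1) * (l'+1) = (n+1).choose l' * (n + 1 - l') :=
        Nat.choose_succ_right_eq (n+1) l'
      have h4 : (n+2).choose (l'+1) = (n+1).choose l' + (n+1).choose (l'+1) :=
        Nat.choose_succ_succ (n+1) l'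
      have h5 : (l'+1).factorial = (l'+1) * l'.factorial := Nat.factorial_succ l'
      have h6 : (m - l') + (n + 1 - l') = k + 1 := by omega
      zify [hm, show l' ≤ n + 1 from hn] at h1 h2 h3 h4 h5 h6 ⊢
      linear_combination ((m.choose (l'+1) : ℤ) * (l'+1).factorial) * h4
        + ((((n+1).choose l' : ℤ)) * m.choose (l'+1)) * h5
        + (((n+1).choose l' : ℤ) * l'.factorial) * h1
        + ((m.choose l' : ℤ) * l'.factorial) * h2
        + ((m.choose l' : ℤ) * l'.factorial) * h3
        + (((n+1).choose l' : ℤ) * m.choose l' * l'.factorial) * h6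
    · rw [Nat.choose_eq_zero_of_lt (by omega : n + 2 < l' + 1),
        Nat.choose_eq_zero_of_lt (by omega : n + 1 < l' + 1),
        Nat.choose_eq_zero_of_lt (by omega : n + 1 < l'),
        Nat.choose_eq_zero_of_lt (by omega : n < l')]
      ring
  · rw [Nat.choose_eq_zero_of_lt (by omega : m < l' + 1),
      Nat.choose_eq_zero_of_lt (by omega : m < l')]
    ring

lemma erec (a : ℂ) (n m k : ℕ) :
    ecoef a (n+2) m k = (if k = 0 then 0 else ecoef a (n+1) m (k-1))
      + a * ((k:ℂ)+1) * ecoef a (n+1) m (k+1) - a * ((n:ℂ)+1) * ecoef a n m k := by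
  by_cases hbig : n + m + 3 ≤ k
  · rw [ecoef_zero a (by omega), ecoef_zero a (by omega), ecoef_zero a (by omega),
      if_neg (by omega : ¬ k = 0), ecoef_zero a (by omega)]
    ring
  · by_cases hpar : (n + m + k) % 2 = 0
    · -- even case
      obtain ⟨l, hl⟩ : ∃ l, k + 2 * l = n + m + 2 := ⟨(n + m + 2 - k) / 2, by omega⟩
      rcases Nat.eq_zero_or_pos l with hl0 | hl1
      · -- l = 0 : k = n + m + 2
        have hk2 : k = n + m + 2 := by omega
        subst hk2
        have hL : ecoef a (n+2) m (n+m+2) = 1 := by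
          rw [ecoef, if_pos (⟨by omega, by omega⟩ : (n+2+m-(n+m+2)) % 2 = 0 ∧ n+m+2 ≤ n+2+m),
            show n + 2 + m - (n+m+2) = 0 from by omega]
          simp
        have hT : ecoef a (n+1) m (n+m+2-1) = 1 := by
          rw [ecoef, if_pos (⟨by omega, by omega⟩ :
              (n+1+m-(n+m+2-1)) % 2 = 0 ∧ n+m+2-1 ≤ n+1+m),
            show n + 1 + m - (n+m+2-1) = 0 from by omega]
          simp
        rw [hL, if_neg (by omega : ¬ n+m+2 = 0), hT,
          ecoef_zero a (show n+1+m < n+m+2+1 from by omega),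
          ecoef_zero a (show n+m < n+m+2 from by omega)]
        ring
      · obtain ⟨l', rfl⟩ : ∃ l', l = l' + 1 := ⟨l - 1, by omega⟩
        have hL : ecoef a (n+2) m k
            = ((n+2).choose (l'+1) * m.choose (l'+1) * (l'+1).factorial : ℕ) * a ^ (l'+1) := by
          rw [ecoef, if_pos (⟨by omega, by omega⟩ : (n+2+m-k) % 2 = 0 ∧ k ≤ n+2+m),
            show n + 2 + m - k = 2 * (l'+1) from by omega,
            show 2 * (l'+1) / 2 = l' + 1 from by omega]
        have hT1 : (if k = 0 then 0 else ecoef a (n+1) m (k-1))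
            = ((n+1).choose (l'+1) * m.choose (l'+1) * (l'+1).factorial : ℕ) * a ^ (l'+1) := by
          rcases eq_or_ne k 0 with rfl | hk0
          · rw [if_pos rfl]
            by_cases hcm : l' + 1 ≤ m
            · rw [Nat.choose_eq_zero_of_lt (by omega : n + 1 < l' + 1)]
              push_cast; ring
            · rw [Nat.choose_eq_zero_of_lt (by omega : m < l' + 1)]
              push_cast; ring
          · rw [if_neg hk0, ecoef, if_pos (⟨by omega, by omega⟩ :
                (n+1+m-(k-1)) % 2 = 0 ∧ k-1 ≤ n+1+m),
              show n + 1 + m - (k-1) = 2 * (l'+1) from by omega,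
              show 2 * (l'+1) / 2 = l' + 1 from by omega]
        have hT2 : ecoef a (n+1) m (k+1)
            = ((n+1).choose l' * m.choose l' * l'.factorial : ℕ) * a ^ l' := by
          rw [ecoef, if_pos (⟨by omega, by omega⟩ : (n+1+m-(k+1)) % 2 = 0 ∧ k+1 ≤ n+1+m),
            show n + 1 + m - (k+1) = 2 * l' from by omega,
            show 2 * l' / 2 = l' from by omega]
        have hT3 : ecoef a n m k
            = (n.choose l' * m.choose l' * l'.factorial : ℕ) * a ^ l' := by
          rw [ecoef, if_pos (⟨by omega, by omega⟩ : (n+m-k) % 2 = 0 ∧ k ≤ n+m),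
            show n + m - k = 2 * l' from by omega,
            show 2 * l' / 2 = l' from by omega]
        rw [hL, hT1, hT2, hT3]
        have key := natkey n m (l'+1) k (by omega) (by omega)
        simp only [Nat.add_sub_cancel] at key
        have keyC : (((n+2).choose (l'+1) * m.choose (l'+1) * (l'+1).factorial
              + (n+1) * (n.choose l' * m.choose l' * l'.factorial) : ℕ) : ℂ)
            = (((n+1).choose (l'+1) * m.choose (l'+1) * (l'+1).factorial
              + (k+1) * ((n+1).choose l' * m.choose l' * l'.factorial) : ℕ) : ℂ) := by
          exact_mod_cast congrArg (Nat.cast : ℕ → ℂ) key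
        push_cast at keyC ⊢
        linear_combination (a ^ (l'+1)) * keyC + ((k:ℂ)+1) * ((n+1).choose l' : ℂ)
          * (m.choose l' : ℂ) * (l'.factorial : ℂ) * (a^(l'+1) - a * a^l')
    · -- odd case: everything vanishes
      have e1 : ecoef a (n+2) m k = 0 := by
        rw [ecoef, if_neg]; rintro ⟨c1, -⟩; omega
      have e3 : ecoef a (n+1) m (k+1) = 0 := by
        rw [ecoef, if_neg]; rintro ⟨c1, c2⟩; omega
      have e4 : ecoef a n m k = 0 := by
        rw [ecoef, if_neg]; rintro ⟨c1, c2⟩; omega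
      rw [e1, e3, e4]
      rcases eq_or_ne k 0 with rfl | hk0
      · simp
      · rw [if_neg hk0, show ecoef a (n+1) m (k-1) = 0 from by
          rw [ecoef, if_neg]; rintro ⟨c1, c2⟩; omega]
        ring


open Polynomial

section herm
variable {a b : ℂ} {p : ℕ → Polynomial ℂ}

lemma pmonic (hp0 : p 0 = 1) (hp1 : p 1 = X - C b)
    (hrec : ∀ n : ℕ, 1 ≤ n → p (n + 1) = (X - C b) * p n - C (a * n) * p (n - 1)) :
    ∀ n, (p n).Monic ∧ (p n).natDegree = n := by
  intro n
  induction n using Nat.strong_induction_on with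
  | _ n ih =>
    match n with
    | 0 => rw [hp0]; exact ⟨monic_one, natDegree_one⟩
    | 1 => rw [hp1]; exact ⟨monic_X_sub_C b, by simp⟩
    | (n+2) =>
      have h := hrec (n+1) (by omega)
      simp only [Nat.add_sub_cancel] at h
      obtain ⟨m1, d1⟩ := ih (n+1) (by omega)
      obtain ⟨m0, d0⟩ := ih n (by omega)
      have mf : ((X - C b) * p (n+1)).Monic := (monic_X_sub_C b).mul m1
      have df : ((X - C b) * p (n+1)).natDegree = n + 2 := by
        rw [(monic_X_sub_C b).natDegree_mul m1, d1, natDegree_X_sub_C]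
        omega
      have dg : (C (a * ((n+1 : ℕ) : ℂ)) * p n).natDegree < n + 2 := by
        refine lt_of_le_of_lt (natDegree_C_mul_le _ _) ?_
        omega
      have hdeg : (p (n+2)).natDegree = n + 2 := by
        rw [h, natDegree_sub_eq_left_of_natDegree_lt (by rw [df]; exact dg), df]
      have hc1 : ((X - C b) * p (n+1)).coeff (n+2) = 1 := by
        conv_lhs => rw [← df]
        exact mf.coeff_natDegree
      refine ⟨?_, hdeg⟩
      rw [Monic, leadingCoeff, hdeg, h, coeff_sub,
        coeff_eq_zero_of_natDegree_lt dg, hc1, sub_zero]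

lemma pstep (hp0 : p 0 = 1) (hp1 : p 1 = X - C b)
    (hrec : ∀ n : ℕ, 1 ≤ n → p (n + 1) = (X - C b) * p n - C (a * n) * p (n - 1)) :
    ∀ k : ℕ, (X - C b) * p k = p (k + 1) + C (a * k) * p (k - 1) := by
  intro k
  match k with
  | 0 => simp [hp0, hp1]
  | (k+1) =>
    have h := hrec (k+1) (by omega)
    rw [h]; ring

lemma puniq (hp0 : p 0 = 1) (hp1 : p 1 = X - C b)
    (hrec : ∀ n : ℕ, 1 ≤ n → p (n + 1) = (X - C b) * p n - C (a * n) * p (n - 1)) :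
    ∀ N (c : ℕ → ℂ), (∑ k ∈ Finset.range N, C (c k) * p k) = 0 → ∀ k, k < N → c k = 0 := by
  intro N
  induction N with
  | zero => intro c h k hk; omega
  | succ N ih =>
    intro c h k hk
    have hcN : c N = 0 := by
      have h2 := congrArg (fun q => Polynomial.coeff q N) h
      simp only [finset_sum_coeff, coeff_zero] at h2
      rw [Finset.sum_eq_single_of_mem N (Finset.self_mem_range_succ N) ?side] at h2
      · obtain ⟨mN, dN⟩ := pmonic hp0 hp1 hrec N
        have hc1 : (p N).coeff N = 1 := by
          have := mN.coeff_natDegree; rwa [dN] at this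
        rw [coeff_C_mul, hc1, mul_one] at h2
        exact h2
      case side =>
        intro j hj hjN
        obtain ⟨-, dj⟩ := pmonic hp0 hp1 hrec j
        have hjlt : j < N := by
          have := Finset.mem_range.mp hj; omega
        rw [coeff_C_mul, coeff_eq_zero_of_natDegree_lt (by rw [dj]; exact hjlt), mul_zero]
    rcases Nat.lt_succ_iff_lt_or_eq.mp hk with hk' | rfl
    · refine ih c ?_ k hk'
      rw [Finset.sum_range_succ, hcN] at h
      simpa using h
    · exact hcN

lemma puniq' (hp0 : p 0 = 1) (hp1 : p 1 = X - C b)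
    (hrec : ∀ n : ℕ, 1 ≤ n → p (n + 1) = (X - C b) * p n - C (a * n) * p (n - 1))
    (N : ℕ) (c c' : ℕ → ℂ)
    (h : (∑ k ∈ Finset.range N, C (c k) * p k) = ∑ k ∈ Finset.range N, C (c' k) * p k) :
    ∀ k, k < N → c k = c' k := by
  intro k hk
  have h0 : (∑ k ∈ Finset.range N, C ((fun k => c k - c' k) k) * p k) = 0 := by
    simp only [map_sub, sub_mul]
    rw [Finset.sum_sub_distrib, h, sub_self]
  exact sub_eq_zero.mp (puniq hp0 hp1 hrec N _ h0 k hk)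

end herm


noncomputable def Afun (a : ℂ) : ℕ → ℕ → ℂ :=
  fun i j => if i = j then (Nat.factorial i : ℂ) * a ^ i else 0

lemma matPow_D (j : ℕ) : ∀ n i : ℕ, matPow Dmat j n i
    = if n = i + j then (n.descFactorial j : ℂ) else 0 := by
  induction j with
  | zero => intro n i; simp [matPow]
  | succ j ih =>
    intro n i
    show matMul (matPow Dmat j) Dmat n i = _
    rw [matMul, tsum_eq_single (i+1) ?_]
    · rw [ih n (i+1)]
      simp only [Dmat, if_pos rfl]
      by_cases h : n = i + 1 + j
      · rw [if_pos h, if_pos (show n = i + (j + 1) from by omega)]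
        subst h
        rw [Nat.descFactorial_succ, show i + 1 + j - j = i + 1 from by omega]
        push_cast; ring
      · rw [if_neg h, if_neg (show ¬ n = i + (j + 1) from by omega), zero_mul]
    · intro l hl
      have : Dmat l i = 0 := by
        simp only [Dmat]; rw [if_neg (fun hc => hl (by omega))]
      rw [this, mul_zero]

lemma matPow_Dhat (j : ℕ) : ∀ l m : ℕ, matPow DhatMat j l m
    = if m = l + j then (m.descFactorial j : ℂ) else 0 := by
  induction j with
  | zero => intro l m; simp [matPow, eq_comm]
  | succ j ih =>
    intro l m
    show matMul (matPow DhatMat j) DhatMat l m = _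
    by_cases hm : 1 ≤ m ∧ m = l + j + 1
    · rw [matMul, tsum_eq_single (m-1) ?_]
      · rw [ih l (m-1)]
        simp only [DhatMat]
        rw [if_pos (by omega : m - 1 = l + j), if_pos (by omega : m = (m-1) + 1),
          if_pos (by omega : m = l + (j+1))]
        obtain ⟨m', rfl⟩ : ∃ m', m = m' + 1 := ⟨m - 1, by omega⟩
        simp only [Nat.add_sub_cancel]
        rw [Nat.succ_descFactorial_succ]
        push_cast; ring
      · intro c hc
        have : DhatMat c m = 0 := by
          simp only [DhatMat]; rw [if_neg (fun hcc => hc (by omega))]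
        rw [this, mul_zero]
    · rw [if_neg (by omega)]
      rw [matMul, tsum_eq_single 0 ?_]
      · rcases eq_or_ne m (0 + 1) with h1 | h1
        · rw [ih l 0, if_neg (by omega), zero_mul]
        · have : DhatMat 0 m = 0 := by simp only [DhatMat]; rw [if_neg h1]
          rw [this, mul_zero]
      · intro c hc
        by_cases h1 : m = c + 1
        · rw [ih l c, if_neg (by omega), zero_mul]
        · have : DhatMat c m = 0 := by simp only [DhatMat]; rw [if_neg h1]
          rw [this, mul_zero]

lemma entry (a : ℂ) (j i n m : ℕ) :
    matMul (matMul (matPow Dmat j) (Afun a)) (matPow DhatMat i) n m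
      = if j ≤ n ∧ n + i = m + j then
          (n.descFactorial j : ℂ) * ((n-j).factorial : ℂ) * a^(n-j) * (m.descFactorial i : ℂ)
        else 0 := by
  have hin : ∀ l, matMul (matPow Dmat j) (Afun a) n l
      = if n = l + j then (n.descFactorial j : ℂ) * ((l.factorial : ℂ) * a ^ l) else 0 := by
    intro l
    rw [matMul, tsum_eq_single l ?_]
    · rw [matPow_D j n l]
      simp only [Afun, if_pos rfl]
      split
      · rfl
      · rw [zero_mul]
    · intro c hc
      have : Afun a c l = 0 := by simp only [Afun]; rw [if_neg hc]
      rw [this, mul_zero]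
  by_cases hj : j ≤ n
  · rw [matMul, tsum_eq_single (n - j) ?_]
    · rw [hin (n-j), if_pos (by omega), matPow_Dhat i (n-j) m]
      by_cases h : n + i = m + j
      · rw [if_pos (by omega), if_pos (by omega : j ≤ n ∧ n + i = m + j)]
        ring
      · rw [if_neg (by omega), if_neg (by omega), mul_zero]
    · intro l hl
      rw [hin l, if_neg (fun hc => hl (by omega)), zero_mul]
  · rw [if_neg (by omega), matMul, tsum_eq_single 0 ?_]
    · rw [hin 0, if_neg (by omega), zero_mul]
    · intro l hl
      rw [hin l, if_neg (by omega), zero_mul]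

lemma part2sum (a : ℂ) (n m k : ℕ) : ecoef a n m k =
    (1 / (k.factorial : ℂ)) * ∑ j ∈ Finset.range (k + 1), (k.choose j : ℂ) *
      matMul (matMul (matPow Dmat j) (Afun a)) (matPow DhatMat (k - j)) n m := by
  by_cases hex : ∃ j, j ≤ n ∧ j ≤ k ∧ m + 2*j = n + k
  · obtain ⟨j, hjn, hjk, hj⟩ := hex
    rw [Finset.sum_eq_single j ?_ ?_]
    · rw [entry, if_pos ⟨hjn, by omega⟩]
      rw [ecoef, if_pos (⟨by omega, by omega⟩ : (n + m - k) % 2 = 0 ∧ k ≤ n + m),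
        show n + m - k = 2*(n-j) from by omega, show 2*(n-j)/2 = n-j from by omega]
      have hnat : k.factorial * (n.choose (n-j) * m.choose (n-j) * (n-j).factorial)
          = k.choose j * (n.descFactorial j * ((n-j).factorial * m.descFactorial (k-j))) := by
        rw [Nat.descFactorial_eq_factorial_mul_choose n j,
          Nat.descFactorial_eq_factorial_mul_choose m (k-j),
          Nat.choose_symm hjn,
          show m.choose (k-j) = m.choose (n-j) from by
            rw [show k - j = m - (n - j) from by omega, Nat.choose_symm (by omega)]]
        rw [show k.choose j * (j.factorial * n.choose j * ((n-j).factorial *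
              ((k-j).factorial * m.choose (n-j))))
            = (k.choose j * j.factorial * (k-j).factorial) *
              (n.choose j * m.choose (n-j) * (n-j).factorial) from by ring,
          Nat.choose_mul_factorial_mul_factorial hjk]
      have hkne : (k.factorial : ℂ) ≠ 0 := Nat.cast_ne_zero.mpr k.factorial_ne_zero
      rw [div_mul_eq_mul_div, one_mul, eq_div_iff hkne]
      have hnatC := congrArg (Nat.cast : ℕ → ℂ) hnat
      push_cast at hnatC ⊢
      linear_combination (a ^ (n - j)) * hnatC
    · intro l hl hlj
      rw [entry, if_neg ?_, mul_zero]
      rintro ⟨h1, h2⟩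
      have hlk : l ≤ k := by have := Finset.mem_range.mp hl; omega
      exact hlj (by omega)
    · intro hj'
      exact absurd (Finset.mem_range.mpr (by omega)) hj'
  · rw [Finset.sum_eq_zero ?_, mul_zero]
    · rw [ecoef]
      split
      · rename_i hc
        by_cases hln : (n+m-k)/2 ≤ n
        · by_cases hlm : (n+m-k)/2 ≤ m
          · exact absurd ⟨n - (n+m-k)/2, by omega, by omega, by omega⟩ hex
          · rw [Nat.choose_eq_zero_of_lt (show m < (n+m-k)/2 from by omega)]
            push_cast; ring
        · rw [Nat.choose_eq_zero_of_lt (show n < (n+m-k)/2 from by omega)]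
          push_cast; ring
      · rfl
    · intro j hjr
      rw [entry, if_neg ?_, mul_zero]
      rintro ⟨h1, h2⟩
      have := Finset.mem_range.mp hjr
      exact hex ⟨j, h1, by omega, by omega⟩

lemma ecoef_formula (a : ℂ) (n m k : ℕ) : ecoef a n m k =
    if (n + m - k) % 2 = 0 ∧ k ≤ n + m ∧ m ≤ n + k ∧ n ≤ m + k then
      (n.factorial : ℂ) * m.factorial * a ^ ((n+m-k)/2) /
        ((((n+k-m)/2).factorial : ℂ) * (((m+k-n)/2).factorial : ℂ) *
          (((n+m-k)/2).factorial : ℂ))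
    else 0 := by
  by_cases h : (n + m - k) % 2 = 0 ∧ k ≤ n + m ∧ m ≤ n + k ∧ n ≤ m + k
  · obtain ⟨h1, h2, h3, h4⟩ := h
    rw [if_pos ⟨h1, h2, h3, h4⟩, ecoef, if_pos ⟨h1, h2⟩]
    have hln : (n+m-k)/2 ≤ n := by omega
    have hlm : (n+m-k)/2 ≤ m := by omega
    rw [show (n+k-m)/2 = n - (n+m-k)/2 from by omega,
      show (m+k-n)/2 = m - (n+m-k)/2 from by omega]
    set l := (n + m - k) / 2 with hldef
    have hden : ((n-l).factorial : ℂ) * ((m-l).factorial : ℂ) * (l.factorial : ℂ) ≠ 0 := by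
      refine mul_ne_zero (mul_ne_zero ?_ ?_) ?_ <;>
        exact Nat.cast_ne_zero.mpr (Nat.factorial_ne_zero _)
    rw [eq_div_iff hden]
    have e1 := congrArg (Nat.cast : ℕ → ℂ) (Nat.choose_mul_factorial_mul_factorial hln)
    have e2 := congrArg (Nat.cast : ℕ → ℂ) (Nat.choose_mul_factorial_mul_factorial hlm)
    push_cast at e1 e2 ⊢
    linear_combination (a ^ l * (m.choose l : ℂ) * ((m-l).factorial : ℂ) * (l.factorial : ℂ)) * e1
      + (a ^ l * (n.factorial : ℂ)) * e2
  · rw [if_neg h, ecoef]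
    split
    · rename_i hc
      have hor : n + k < m ∨ m + k < n := by
        by_contra hcon
        push_neg at hcon
        exact h ⟨hc.1, hc.2, by omega, by omega⟩
      rcases hor with hor | hor
      · rw [Nat.choose_eq_zero_of_lt (show n < (n+m-k)/2 from by omega)]
        push_cast; ring
      · rw [Nat.choose_eq_zero_of_lt (show m < (n+m-k)/2 from by omega)]
        push_cast; ring
    · rfl

lemma ecoef_k0 (a : ℂ) (n m : ℕ) :
    ecoef a n m 0 = if n = m then (n.factorial : ℂ) * a ^ n else 0 := by
  rcases eq_or_ne n m with h | h
  · rw [if_pos h, ecoef, if_pos (⟨by omega, by omega⟩ : (n + m - 0) % 2 = 0 ∧ 0 ≤ n + m),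
      show n + m - 0 = 2*n from by omega, show 2*n/2 = n from by omega, Nat.choose_self,
      show m.choose n = 1 from by rw [← h, Nat.choose_self]]
    push_cast; ring
  · rw [if_neg h, ecoef]
    split
    · rename_i hc
      rcases Nat.lt_or_ge n m with hlt | hge
      · rw [Nat.choose_eq_zero_of_lt (show n < (n+m-0)/2 from by omega)]
        push_cast; ring
      · rw [Nat.choose_eq_zero_of_lt (show m < (n+m-0)/2 from by omega)]
        push_cast; ring
    · rfl

lemma ecoef_zero_left (a : ℂ) (m k : ℕ) : ecoef a 0 m k = if k = m then 1 else 0 := by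
  rcases eq_or_ne k m with hk | hk
  · rw [if_pos hk, ecoef, if_pos (⟨by omega, by omega⟩ : (0 + m - k) % 2 = 0 ∧ k ≤ 0 + m),
      show 0 + m - k = 0 from by omega]
    simp
  · rw [if_neg hk, ecoef]
    split
    · rename_i hc
      rw [Nat.choose_eq_zero_of_lt (show 0 < (0+m-k)/2 from by omega)]
      push_cast; ring
    · rfl

lemma ecoef_one_left (a : ℂ) (m k : ℕ) :
    ecoef a 1 m k = (if k = m + 1 then 1 else 0) + (if k + 1 = m then a * m else 0) := by
  rcases eq_or_ne k (m+1) with h1 | h1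
  · rw [ecoef, if_pos (⟨by omega, by omega⟩ : (1 + m - k) % 2 = 0 ∧ k ≤ 1 + m),
      show 1 + m - k = 0 from by omega, if_pos h1, if_neg (by omega)]
    simp
  · rcases eq_or_ne (k+1) m with h2 | h2
    · rw [ecoef, if_pos (⟨by omega, by omega⟩ : (1 + m - k) % 2 = 0 ∧ k ≤ 1 + m),
        show 1 + m - k = 2 from by omega, if_neg h1, if_pos h2]
      simp only [show (2:ℕ)/2 = 1 from rfl, Nat.choose_self, Nat.choose_one_right,
        Nat.factorial_one]
      push_cast; ring
    · rw [if_neg h1, if_neg h2, ecoef]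
      split
      · rename_i hc
        rw [Nat.choose_eq_zero_of_lt (show 1 < (1+m-k)/2 from by omega)]
        push_cast; ring
      · simp

section dlem
open Polynomial
variable {a b : ℂ} {p : ℕ → Polynomial ℂ} {d : ℕ → ℕ → ℕ → ℂ}

lemma sum_ifC (N j : ℕ) (x : ℂ) (p : ℕ → Polynomial ℂ) :
    ∑ k ∈ Finset.range N, C (if k = j then x else 0) * p k
      = if j ∈ Finset.range N then C x * p j else 0 := by
  rw [← Finset.sum_ite_eq' (Finset.range N) j (fun k => C x * p k)]
  refine Finset.sum_congr rfl fun k _ => ?_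
  split <;> simp_all

lemma dzero (hp0 : p 0 = 1) (hp1 : p 1 = X - C b)
    (hrec : ∀ n : ℕ, 1 ≤ n → p (n + 1) = (X - C b) * p n - C (a * n) * p (n - 1))
    (hd : ∀ n m : ℕ, p n * p m =
        ∑ k ∈ Finset.range (n + m + 1), C (d n m k) * p k)
    (hd0 : ∀ n m k : ℕ, n + m < k → d n m k = 0) :
    ∀ m k, d 0 m k = ecoef a 0 m k := by
  intro m k
  rw [ecoef_zero_left]
  rcases le_or_gt k m with hk | hk
  · refine puniq' hp0 hp1 hrec (0 + m + 1) (d 0 m)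
      (fun k => if k = m then 1 else 0) ?_ k (by omega)
    rw [← hd 0 m, hp0, one_mul, sum_ifC,
      if_pos (Finset.mem_range.mpr (by omega)), map_one, one_mul]
  · rw [hd0 0 m k (by omega), if_neg (by omega)]

lemma done (hp0 : p 0 = 1) (hp1 : p 1 = X - C b)
    (hrec : ∀ n : ℕ, 1 ≤ n → p (n + 1) = (X - C b) * p n - C (a * n) * p (n - 1))
    (hd : ∀ n m : ℕ, p n * p m =
        ∑ k ∈ Finset.range (n + m + 1), C (d n m k) * p k)
    (hd0 : ∀ n m k : ℕ, n + m < k → d n m k = 0) :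
    ∀ m k, d 1 m k = ecoef a 1 m k := by
  intro m k
  rcases le_or_gt k (m + 1) with hk | hk
  swap
  · rw [hd0 1 m k (by omega), ecoef_zero a (by omega)]
  refine puniq' hp0 hp1 hrec (1 + m + 1) (d 1 m) (ecoef a 1 m) ?_ k (by omega)
  rw [← hd 1 m, hp1, pstep hp0 hp1 hrec m,
    show (∑ k ∈ Finset.range (1+m+1), C (ecoef a 1 m k) * p k)
      = ∑ k ∈ Finset.range (1+m+1), (C (if k = m+1 then (1:ℂ) else 0) * p k
          + C (if k + 1 = m then a * (m:ℂ) else 0) * p k) from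
      Finset.sum_congr rfl fun k _ => by rw [ecoef_one_left, map_add, add_mul],
    Finset.sum_add_distrib, sum_ifC, if_pos (Finset.mem_range.mpr (by omega))]
  rw [map_one, one_mul]
  congr 1
  match m with
  | 0 => simp
  | (m'+1) =>
    simp only [add_left_inj]
    rw [sum_ifC, if_pos (Finset.mem_range.mpr (by omega))]
    norm_num

lemma drec (hp0 : p 0 = 1) (hp1 : p 1 = X - C b)
    (hrec : ∀ n : ℕ, 1 ≤ n → p (n + 1) = (X - C b) * p n - C (a * n) * p (n - 1))
    (hd : ∀ n m : ℕ, p n * p m =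
        ∑ k ∈ Finset.range (n + m + 1), C (d n m k) * p k)
    (hd0 : ∀ n m k : ℕ, n + m < k → d n m k = 0) :
    ∀ n m k, d (n+2) m k = (if k = 0 then 0 else d (n+1) m (k-1))
      + a * ((k:ℂ)+1) * d (n+1) m (k+1) - a * ((n:ℂ)+1) * d n m k := by
  intro n m k
  set rhs : ℕ → ℂ := fun k => (if k = 0 then 0 else d (n+1) m (k-1))
      + a * ((k:ℂ)+1) * d (n+1) m (k+1) - a * ((n:ℂ)+1) * d n m k with hrhs
  rcases le_or_gt k (n+m+2) with hk | hk
  swap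
  · show _ = rhs k
    rw [hd0 (n+2) m k (by omega), hrhs]
    simp only
    rw [if_neg (by omega : ¬ k = 0), hd0 (n+1) m (k-1) (by omega),
      hd0 (n+1) m (k+1) (by omega), hd0 n m k (by omega)]
    ring
  show _ = rhs k
  have hp2 : p (n+2) = (X - C b) * p (n+1) - C (a * ((n+1:ℕ):ℂ)) * p n := by
    have := hrec (n+1) (by omega)
    simpa using this
  have hB2 : ∀ j : ℕ, C (d (n+1) m j) * ((X - C b) * p j)
      = C (d (n+1) m j) * p (j+1) + C (a * (j:ℂ) * d (n+1) m j) * p (j-1) := by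
    intro j
    rw [pstep hp0 hp1 hrec j, mul_add]
    congr 1
    rw [show (C (a * (j:ℂ) * d (n+1) m j)) = C (a * (j:ℂ)) * C (d (n+1) m j) from by
      rw [← C_mul]]
    ring
  have hS1 : (X - C b) * (p (n+1) * p m)
      = ∑ j ∈ Finset.range (n+m+2), C (d (n+1) m j) * p (j+1)
        + ∑ j ∈ Finset.range (n+m+2), C (a * (j:ℂ) * d (n+1) m j) * p (j-1) := by
    rw [hd (n+1) m, show n+1+m+1 = n+m+2 from by omega, Finset.mul_sum,
      ← Finset.sum_add_distrib]
    refine Finset.sum_congr rfl fun j _ => ?_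
    rw [← hB2 j]; ring
  have hA : ∑ j ∈ Finset.range (n+m+3), C (if j = 0 then (0:ℂ) else d (n+1) m (j-1)) * p j
      = ∑ j ∈ Finset.range (n+m+2), C (d (n+1) m j) * p (j+1) := by
    rw [Finset.sum_range_succ' _ (n+m+2)]
    simp
  have hB : ∑ j ∈ Finset.range (n+m+3), C (a * ((j:ℂ)+1) * d (n+1) m (j+1)) * p j
      = ∑ j ∈ Finset.range (n+m+2), C (a * (j:ℂ) * d (n+1) m j) * p (j-1) := by
    rw [Finset.sum_range_succ _ (n+m+2), Finset.sum_range_succ _ (n+m+1),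
      hd0 (n+1) m (n+m+2+1) (by omega), hd0 (n+1) m (n+m+1+1) (by omega),
      Finset.sum_range_succ' _ (n+m+1)]
    simp only [mul_zero, map_zero, zero_mul, add_zero]
    push_cast
    simp
  have hC : ∑ j ∈ Finset.range (n+m+3), C (a * ((n:ℂ)+1) * d n m j) * p j
      = C (a * ((n+1:ℕ):ℂ)) * (p n * p m) := by
    rw [hd n m, Finset.mul_sum,
      Finset.sum_range_succ _ (n+m+2), Finset.sum_range_succ _ (n+m+1),
      hd0 n m (n+m+2) (by omega), hd0 n m (n+m+1) (by omega)]
    simp only [mul_zero, map_zero, zero_mul, add_zero]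
    refine Finset.sum_congr rfl fun j _ => ?_
    rw [show (C (a * ((n:ℂ)+1) * d n m j)) = C (a * ((n:ℂ)+1)) * C (d n m j) from by
      rw [← C_mul]]
    push_cast
    ring
  have hE : ∑ j ∈ Finset.range (n+m+3), C (d (n+2) m j) * p j
      = ∑ j ∈ Finset.range (n+m+3), C (rhs j) * p j := by
    calc ∑ j ∈ Finset.range (n+m+3), C (d (n+2) m j) * p j
        = p (n+2) * p m := by
          rw [hd (n+2) m, show n+2+m+1 = n+m+3 from by omega]
      _ = (X - C b) * (p (n+1) * p m) - C (a * ((n+1:ℕ):ℂ)) * (p n * p m) := by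
          rw [hp2]; ring
      _ = ∑ j ∈ Finset.range (n+m+3), C (rhs j) * p j := by
          rw [hS1, ← hA, ← hB, ← hC, ← Finset.sum_add_distrib, ← Finset.sum_sub_distrib]
          refine Finset.sum_congr rfl fun j _ => ?_
          rw [hrhs]
          simp only [map_add, map_sub]
          ring
  exact puniq' hp0 hp1 hrec (n+m+3) (d (n+2) m) rhs hE k (by omega)

lemma dkey (hp0 : p 0 = 1) (hp1 : p 1 = X - C b)
    (hrec : ∀ n : ℕ, 1 ≤ n → p (n + 1) = (X - C b) * p n - C (a * n) * p (n - 1))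
    (hd : ∀ n m : ℕ, p n * p m =
        ∑ k ∈ Finset.range (n + m + 1), C (d n m k) * p k)
    (hd0 : ∀ n m k : ℕ, n + m < k → d n m k = 0) :
    ∀ n m k, d n m k = ecoef a n m k := by
  intro n
  induction n using Nat.strong_induction_on with
  | _ n ih =>
    match n with
    | 0 => exact dzero hp0 hp1 hrec hd hd0
    | 1 => exact done hp0 hp1 hrec hd hd0
    | (n+2) =>
      intro m k
      rw [drec hp0 hp1 hrec hd hd0 n m k, ih (n+1) (by omega) m (k+1),
        ih n (by omega) m k, erec]
      congr 1
      congr 1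
      split
      · rfl
      · rw [ih (n+1) (by omega) m (k-1)]

end dlem

theorem stmt15 (a b : ℂ) (ha : a ≠ 0) (p : ℕ → Polynomial ℂ)
    (hp0 : p 0 = 1) (hp1 : p 1 = Polynomial.X - Polynomial.C b)
    (hrec : ∀ n : ℕ, 1 ≤ n →
      p (n + 1) = (Polynomial.X - Polynomial.C b) * p n - Polynomial.C (a * n) * p (n - 1))
    (d : ℕ → ℕ → ℕ → ℂ)
    (hd : ∀ n m : ℕ, p n * p m =
        ∑ k ∈ Finset.range (n + m + 1), Polynomial.C (d n m k) * p k)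
    (hd0 : ∀ n m k : ℕ, n + m < k → d n m k = 0) :
    let A : ℕ → ℕ → ℂ := fun i j => if i = j then (Nat.factorial i : ℂ) * a ^ i else 0
    (∀ n m : ℕ, d n m 0 = if n = m then (Nat.factorial n : ℂ) * a ^ n else 0) ∧
    (∀ n m k : ℕ, d n m k =
      (1 / (Nat.factorial k : ℂ)) *
        ∑ j ∈ Finset.range (k + 1),
          (k.choose j : ℂ) *
            matMul (matMul (matPow Dmat j) A) (matPow DhatMat (k - j)) n m) ∧
    (∀ n m k : ℕ, d n m k =
      if (n + m - k) % 2 = 0 ∧ k ≤ n + m ∧ m ≤ n + k ∧ n ≤ m + k then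
        (Nat.factorial n : ℂ) * (Nat.factorial m : ℂ) * a ^ ((n + m - k) / 2) /
          ((Nat.factorial ((n + k - m) / 2) : ℂ) * (Nat.factorial ((m + k - n) / 2) : ℂ) *
            (Nat.factorial ((n + m - k) / 2) : ℂ))
      else 0) := by
  intro A
  have key := dkey hp0 hp1 hrec hd hd0
  refine ⟨?_, ?_, ?_⟩
  · intro n m
    rw [key n m 0, ecoef_k0]
  · intro n m k
    rw [key n m k, part2sum a n m k]
    rfl
  · intro n m k
    rw [key n m k, ecoef_formula]
end

section
/- Let P and U be infinite lower triangular complex matrices with unit diagonal, with associated polynomial sequences p_k(t) = ∑_j P_{k,j} t^j and u_k(t) = ∑_j U_{k,j} t^j, and set H = P X P⁻¹ and K = U X U⁻¹. Then p_n(t) p_m(t) = ∑_{k=0}^{n+m} e(n,m,k) u_k(t), where e(n,m,k) = ∑_{j=0}^{n+m} (p_n(H))_{m,j} (p_j(K))_{0,k}. -/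
open scoped BigOperators

/-- Bandedness: `A i j = 0` whenever `j > i + c`. -/
def Band (A : ℕ → ℕ → ℂ) (c : ℕ) : Prop := ∀ i j, i + c < j → A i j = 0

lemma matMul_eq_sum {A B : ℕ → ℕ → ℂ} {c : ℕ} (hA : Band A c) (i k N : ℕ)
    (hN : i + c < N) :
    matMul A B i k = ∑ j ∈ Finset.range N, A i j * B j k := by
  refine tsum_eq_sum ?_
  intro j hj
  rw [hA i j (by simp only [Finset.mem_range, not_lt] at hj; omega), zero_mul]

lemma Band.matMul {A B : ℕ → ℕ → ℂ} {c d : ℕ} (hA : Band A c) (hB : Band B d) :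
    Band (matMul A B) (c + d) := by
  intro i k hk
  rw [matMul_eq_sum hA i k (i + c + 1) (by omega)]
  refine Finset.sum_eq_zero fun j hj => ?_
  simp only [Finset.mem_range] at hj
  rw [hB j k (by omega), mul_zero]

lemma matMul_assoc {A B C : ℕ → ℕ → ℂ} {c d : ℕ} (hA : Band A c) (hB : Band B d) :
    matMul (matMul A B) C = matMul A (matMul B C) := by
  funext i l
  rw [matMul_eq_sum (hA.matMul hB) i l (i + c + d + 1) (by omega),
      matMul_eq_sum hA i l (i + c + 1) (by omega)]
  have h1 : ∀ j ∈ Finset.range (i + c + d + 1), matMul A B i j * C j l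
      = ∑ a ∈ Finset.range (i + c + 1), A i a * B a j * C j l := by
    intro j _
    rw [matMul_eq_sum hA i j (i + c + 1) (by omega), Finset.sum_mul]
  rw [Finset.sum_congr rfl h1, Finset.sum_comm]
  refine Finset.sum_congr rfl fun a ha => ?_
  simp only [Finset.mem_range] at ha
  rw [matMul_eq_sum hB a l (i + c + d + 1) (by omega), Finset.mul_sum]
  exact Finset.sum_congr rfl fun j _ => by ring

lemma matMul_Imat (A : ℕ → ℕ → ℂ) : matMul A Imat = A := by
  funext i k
  unfold matMul Imat
  rw [tsum_eq_single k (fun j hj => by simp [hj])]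
  simp

lemma band_Xmat : Band Xmat 1 := by
  intro i j h
  simp only [Xmat, ite_eq_right_iff]
  omega

lemma band_matPow {A : ℕ → ℕ → ℂ} (hA : Band A 1) (r : ℕ) :
    Band (matPow A r) r := by
  induction r with
  | zero =>
      intro i j h
      simp only [matPow, ite_eq_right_iff]
      omega
  | succ r ih => exact ih.matMul hA

lemma band_matPolyEval {A : ℕ → ℕ → ℂ} (hA : Band A 1) (w : Polynomial ℂ) :
    Band (matPolyEval w A) w.natDegree := by
  intro i j h
  refine Finset.sum_eq_zero fun r hr => ?_
  simp only [Finset.mem_range] at hr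
  rw [band_matPow hA r i j (by omega), mul_zero]

lemma matMul_Xmat (P' : ℕ → ℕ → ℂ) (a b : ℕ) :
    matMul P' Xmat a b = if b = 0 then 0 else P' a (b - 1) := by
  unfold matMul Xmat
  rcases b with _ | b
  · simp
  · rw [tsum_eq_single b (fun c hc => by
      have : ¬ (b + 1 = c + 1) := fun h => hc (by omega)
      simp [this, Ne.symm hc])]
    simp

/-- The basic "eigenvector" identity at the polynomial level. -/
lemma row_action {A P' : ℕ → ℕ → ℂ} (hA : Band A 1) (hP' : Band P' 0)
    (hAP : matMul A P' = matMul P' Xmat) (a : ℕ) :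
    ∑ j ∈ Finset.range (a + 2), Polynomial.C (A a j) * rowPoly P' j
      = Polynomial.X * rowPoly P' a := by
  unfold rowPoly
  have h1 : ∀ j ∈ Finset.range (a + 2),
      Polynomial.C (A a j) * ∑ b ∈ Finset.range (j + 1),
          Polynomial.C (P' j b) * Polynomial.X ^ b
      = ∑ b ∈ Finset.range (a + 2),
          Polynomial.C (A a j * P' j b) * Polynomial.X ^ b := by
    intro j hj
    simp only [Finset.mem_range] at hj
    rw [Finset.mul_sum]
    refine (Finset.sum_subset (by
      intro x hx
      simp only [Finset.mem_range] at hx ⊢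
      omega) ?_).trans (Finset.sum_congr rfl fun b _ => by rw [map_mul]; ring)
    intro b _ hb
    simp only [Finset.mem_range, not_lt] at hb
    rw [hP' j b (by omega)]
    simp
  rw [Finset.sum_congr rfl h1, Finset.sum_comm]
  have h2 : ∀ b ∈ Finset.range (a + 2),
      ∑ j ∈ Finset.range (a + 2), Polynomial.C (A a j * P' j b) * Polynomial.X ^ b
      = Polynomial.C (if b = 0 then 0 else P' a (b - 1)) * Polynomial.X ^ b := by
    intro b _
    rw [← Finset.sum_mul, ← map_sum, ← matMul_eq_sum hA a b (a + 2) (by omega), hAP,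
      matMul_Xmat]
  rw [Finset.sum_congr rfl h2, Finset.sum_range_succ' _ (a + 1), Finset.mul_sum]
  simp only [Nat.succ_ne_zero, if_false, if_true, ite_true, ite_false, reduceIte,
    Nat.add_sub_cancel, map_zero, zero_mul, add_zero, pow_zero, mul_one]
  exact Finset.sum_congr rfl fun b _ => by ring

lemma row_action_pow {A P' : ℕ → ℕ → ℂ} (hA : Band A 1) (hP' : Band P' 0)
    (hAP : matMul A P' = matMul P' Xmat) (r i : ℕ) :
    ∑ j ∈ Finset.range (i + r + 1), Polynomial.C (matPow A r i j) * rowPoly P' j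
      = Polynomial.X ^ r * rowPoly P' i := by
  induction r with
  | zero =>
      rw [Finset.sum_eq_single_of_mem i (by simp)]
      · simp [matPow]
      · intro j _ hj
        simp [matPow, Ne.symm hj]
  | succ r ih =>
      have h1 : ∀ j ∈ Finset.range (i + r + 2),
          Polynomial.C (matPow A (r + 1) i j) * rowPoly P' j
          = ∑ a ∈ Finset.range (i + r + 1),
              Polynomial.C (matPow A r i a) * (Polynomial.C (A a j) * rowPoly P' j) := by
        intro j _
        show Polynomial.C (matMul (matPow A r) A i j) * rowPoly P' j = _
        rw [matMul_eq_sum (band_matPow hA r) i j (i + r + 1) (by omega), map_sum,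
          Finset.sum_mul]
        exact Finset.sum_congr rfl fun a _ => by rw [map_mul]; ring
      have : i + (r + 1) + 1 = i + r + 2 := by omega
      rw [this, Finset.sum_congr rfl h1, Finset.sum_comm]
      have h2 : ∀ a ∈ Finset.range (i + r + 1),
          ∑ j ∈ Finset.range (i + r + 2),
              Polynomial.C (matPow A r i a) * (Polynomial.C (A a j) * rowPoly P' j)
          = Polynomial.C (matPow A r i a) * (Polynomial.X * rowPoly P' a) := by
        intro a ha
        simp only [Finset.mem_range] at ha
        rw [← Finset.mul_sum, ← row_action hA hP' hAP a]
        congr 1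
        refine (Finset.sum_subset (by
          intro x hx
          simp only [Finset.mem_range] at hx ⊢
          omega) ?_).symm
        intro j _ hj
        simp only [Finset.mem_range, not_lt] at hj
        rw [hA a j (by omega)]
        simp
      rw [Finset.sum_congr rfl h2]
      have h3 : ∀ a ∈ Finset.range (i + r + 1),
          Polynomial.C (matPow A r i a) * (Polynomial.X * rowPoly P' a)
          = Polynomial.X * (Polynomial.C (matPow A r i a) * rowPoly P' a) :=
        fun a _ => by ring
      rw [Finset.sum_congr rfl h3, ← Finset.mul_sum, ih]
      ring

lemma row_action_poly {A P' : ℕ → ℕ → ℂ} (hA : Band A 1) (hP' : Band P' 0)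
    (hAP : matMul A P' = matMul P' Xmat) (w : Polynomial ℂ) (i N : ℕ)
    (hN : i + w.natDegree < N) :
    ∑ j ∈ Finset.range N, Polynomial.C (matPolyEval w A i j) * rowPoly P' j
      = w * rowPoly P' i := by
  have h1 : ∀ j ∈ Finset.range N,
      Polynomial.C (matPolyEval w A i j) * rowPoly P' j
      = ∑ r ∈ Finset.range (w.natDegree + 1),
          Polynomial.C (w.coeff r) *
            (Polynomial.C (matPow A r i j) * rowPoly P' j) := by
    intro j _
    unfold matPolyEval
    rw [map_sum, Finset.sum_mul]
    exact Finset.sum_congr rfl fun r _ => by rw [map_mul]; ring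
  rw [Finset.sum_congr rfl h1, Finset.sum_comm]
  have h2 : ∀ r ∈ Finset.range (w.natDegree + 1),
      ∑ j ∈ Finset.range N,
          Polynomial.C (w.coeff r) * (Polynomial.C (matPow A r i j) * rowPoly P' j)
      = Polynomial.C (w.coeff r) * (Polynomial.X ^ r * rowPoly P' i) := by
    intro r hr
    simp only [Finset.mem_range] at hr
    rw [← Finset.mul_sum, ← row_action_pow hA hP' hAP r i]
    congr 1
    refine (Finset.sum_subset (by
      intro x hx
      simp only [Finset.mem_range] at hx ⊢
      omega) ?_).symm
    intro j _ hj
    simp only [Finset.mem_range, not_lt] at hj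
    rw [band_matPow hA r i j (by omega)]
    simp
  rw [Finset.sum_congr rfl h2]
  conv_rhs => rw [w.as_sum_range_C_mul_X_pow, Finset.sum_mul]
  exact Finset.sum_congr rfl fun r _ => by ring

lemma rowPoly_natDegree_le (M : ℕ → ℕ → ℂ) (k : ℕ) :
    (rowPoly M k).natDegree ≤ k := by
  refine Polynomial.natDegree_sum_le_of_forall_le _ _ fun j hj => ?_
  simp only [Finset.mem_range] at hj
  exact (Polynomial.natDegree_C_mul_X_pow_le _ _).trans (by omega)

theorem stmt17 (P U Pinv Uinv : ℕ → ℕ → ℂ)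
    (hPlt : ∀ k j : ℕ, j > k → P k j = 0) (hPdiag : ∀ k, P k k = 1)
    (hUlt : ∀ k j : ℕ, j > k → U k j = 0) (hUdiag : ∀ k, U k k = 1)
    (hPinvLt : ∀ k j : ℕ, j > k → Pinv k j = 0)
    (hUinvLt : ∀ k j : ℕ, j > k → Uinv k j = 0)
    (hP1 : matMul P Pinv = Imat) (hP2 : matMul Pinv P = Imat)
    (hU1 : matMul U Uinv = Imat) (hU2 : matMul Uinv U = Imat) (n m : ℕ) :
    let H := matMul (matMul P Xmat) Pinv
    let K := matMul (matMul U Xmat) Uinv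
    let e : ℕ → ℂ := fun k =>
      ∑ j ∈ Finset.range (n + m + 1),
        matPolyEval (rowPoly P n) H m j * matPolyEval (rowPoly P j) K 0 k
    rowPoly P n * rowPoly P m =
      ∑ k ∈ Finset.range (n + m + 1), Polynomial.C (e k) * rowPoly U k := by
  intro H K e
  have bP : Band P 0 := fun i j h => hPlt i j (by omega)
  have bU : Band U 0 := fun i j h => hUlt i j (by omega)
  have bPinv : Band Pinv 0 := fun i j h => hPinvLt i j (by omega)
  have bUinv : Band Uinv 0 := fun i j h => hUinvLt i j (by omega)
  have bPX : Band (matMul P Xmat) 1 := bP.matMul band_Xmat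
  have bUX : Band (matMul U Xmat) 1 := bU.matMul band_Xmat
  have bH : Band H 1 := bPX.matMul bPinv
  have bK : Band K 1 := bUX.matMul bUinv
  have hHP : matMul H P = matMul P Xmat := by
    show matMul (matMul (matMul P Xmat) Pinv) P = _
    rw [matMul_assoc bPX bPinv, hP2, matMul_Imat]
  have hKU : matMul K U = matMul U Xmat := by
    show matMul (matMul (matMul U Xmat) Uinv) U = _
    rw [matMul_assoc bUX bUinv, hU2, matMul_Imat]
  have hU0 : rowPoly U 0 = 1 := by
    unfold rowPoly
    simp [hUdiag 0]
  have h1 : ∀ k ∈ Finset.range (n + m + 1),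
      Polynomial.C (e k) * rowPoly U k
      = ∑ j ∈ Finset.range (n + m + 1),
          Polynomial.C (matPolyEval (rowPoly P n) H m j) *
            (Polynomial.C (matPolyEval (rowPoly P j) K 0 k) * rowPoly U k) := by
    intro k _
    show Polynomial.C (∑ j ∈ Finset.range (n + m + 1), _) * rowPoly U k = _
    rw [map_sum, Finset.sum_mul]
    exact Finset.sum_congr rfl fun j _ => by rw [map_mul]; ring
  rw [Finset.sum_congr rfl h1, Finset.sum_comm]
  have h2 : ∀ j ∈ Finset.range (n + m + 1),
      ∑ k ∈ Finset.range (n + m + 1),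
          Polynomial.C (matPolyEval (rowPoly P n) H m j) *
            (Polynomial.C (matPolyEval (rowPoly P j) K 0 k) * rowPoly U k)
      = Polynomial.C (matPolyEval (rowPoly P n) H m j) * rowPoly P j := by
    intro j hj
    simp only [Finset.mem_range] at hj
    rw [← Finset.mul_sum,
      row_action_poly bK bU hKU (rowPoly P j) 0 (n + m + 1)
        (by have := rowPoly_natDegree_le P j; omega),
      hU0, mul_one]
  rw [Finset.sum_congr rfl h2,
    row_action_poly bH bP hHP (rowPoly P n) m (n + m + 1)
      (by have := rowPoly_natDegree_le P n; omega)]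
end

section
/- With P, U, H = P X P⁻¹, K = U X U⁻¹, and polynomial sequences {p_k}, {u_k} as above, the connection formulas p_m(t) = ∑_{k=0}^{m} (p_m(K))_{0,k} u_k(t) and u_m(t) = ∑_{k=0}^{m} (u_m(H))_{0,k} p_k(t) hold, and consequently the connection coefficient matrices are mutually inverse: ∑_{k} (p_m(K))_{0,k} (u_k(H))_{0,n} = δ_{m,n} for all m, n ∈ ℕ. -/
open scoped BigOperators

section AuxLemmas

lemma tsum_eq_range (f : ℕ → ℂ) (N : ℕ) (h : ∀ n, N ≤ n → f n = 0) :
    ∑' n, f n = ∑ n ∈ Finset.range N, f n :=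
  tsum_eq_sum (fun n hn => h n (by simpa using hn))

lemma coeff_rowPoly (M : ℕ → ℕ → ℂ) (hlt : ∀ k j : ℕ, j > k → M k j = 0) (k j : ℕ) :
    (rowPoly M k).coeff j = M k j := by
  unfold rowPoly
  rw [Polynomial.finset_sum_coeff]
  simp only [Polynomial.coeff_C_mul, Polynomial.coeff_X_pow, mul_ite, mul_one, mul_zero]
  by_cases hj : j < k + 1
  · rw [Finset.sum_eq_single j]
    · simp
    · intro b _ hb; simp [Ne.symm hb]
    · intro hcon; exact absurd (Finset.mem_range.mpr hj) hcon
  · rw [Finset.sum_eq_zero, hlt k j (by omega)]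
    intro b hb
    rw [if_neg]
    rw [Finset.mem_range] at hb; omega

lemma natDegree_rowPoly (M : ℕ → ℕ → ℂ) (hlt : ∀ k j : ℕ, j > k → M k j = 0)
    (hdiag : ∀ k, M k k = 1) (m : ℕ) : (rowPoly M m).natDegree = m := by
  apply le_antisymm
  · rw [Polynomial.natDegree_le_iff_coeff_eq_zero]
    intro N hN
    rw [coeff_rowPoly M hlt]
    exact hlt m N hN
  · apply Polynomial.le_natDegree_of_ne_zero
    rw [coeff_rowPoly M hlt, hdiag]
    exact one_ne_zero

lemma BinvB_fin (B Binv : ℕ → ℕ → ℂ)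
    (hBinvLt : ∀ k j : ℕ, j > k → Binv k j = 0)
    (hB2 : matMul Binv B = Imat) :
    ∀ j i N : ℕ, j < N → ∑ l ∈ Finset.range N, Binv j l * B l i = Imat j i := by
  intro j i N hjN
  have := congrFun (congrFun hB2 j) i
  rw [matMul] at this
  rw [← this, tsum_eq_range _ N]
  intro n hn
  rw [hBinvLt j n (by omega), zero_mul]

lemma Binv_diag (B Binv : ℕ → ℕ → ℂ)
    (hBlt : ∀ k j : ℕ, j > k → B k j = 0) (hBdiag : ∀ k, B k k = 1)
    (hBinvLt : ∀ k j : ℕ, j > k → Binv k j = 0)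
    (hB2 : matMul Binv B = Imat) : ∀ k, Binv k k = 1 := by
  intro k
  have h := BinvB_fin B Binv hBinvLt hB2 k k (k + 1) (by omega)
  rw [Finset.sum_eq_single k] at h
  · rw [hBdiag, mul_one] at h
    simpa [Imat] using h
  · intro b hb hbk
    rw [Finset.mem_range] at hb
    rw [hBlt b k (by omega), mul_zero]
  · intro hcon; exact absurd (Finset.mem_range.mpr (by omega)) hcon

lemma BX_entry_zero (B : ℕ → ℕ → ℂ) (l : ℕ) : matMul B Xmat l 0 = 0 := by
  rw [matMul]
  convert tsum_zero with j
  simp [Xmat]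

lemma BX_entry_succ (B : ℕ → ℕ → ℂ) (l i : ℕ) : matMul B Xmat l (i + 1) = B l i := by
  rw [matMul, tsum_eq_single i]
  · simp [Xmat]
  · intro b hb
    have : Xmat b (i + 1) = 0 := by simp only [Xmat, if_neg (by omega : ¬ i + 1 = b + 1)]
    rw [this, mul_zero]

lemma K_entry (B Binv : ℕ → ℕ → ℂ)
    (hBlt : ∀ k j : ℕ, j > k → B k j = 0) (l k : ℕ) :
    matMul (matMul B Xmat) Binv l k = ∑ i ∈ Finset.range (l + 1), B l i * Binv (i + 1) k := by
  rw [matMul, tsum_eq_range _ (l + 2)]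
  · rw [Finset.sum_range_succ']
    rw [BX_entry_zero B, zero_mul, add_zero]
    refine Finset.sum_congr rfl fun i _ => ?_
    rw [BX_entry_succ B]
  · intro n hn
    obtain ⟨i, rfl⟩ : ∃ i, n = i + 1 := ⟨n - 1, by omega⟩
    rw [BX_entry_succ B, hBlt l i (by omega), zero_mul]

lemma row0_pow (B Binv : ℕ → ℕ → ℂ)
    (hBlt : ∀ k j : ℕ, j > k → B k j = 0) (hBdiag : ∀ k, B k k = 1)
    (hBinvLt : ∀ k j : ℕ, j > k → Binv k j = 0)
    (hB2 : matMul Binv B = Imat) :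
    ∀ j k : ℕ, matPow (matMul (matMul B Xmat) Binv) j 0 k = Binv j k := by
  intro j
  induction j with
  | zero =>
    intro k
    rcases Nat.eq_zero_or_pos k with rfl | hk
    · show (if (0:ℕ) = 0 then (1:ℂ) else 0) = Binv 0 0
      rw [if_pos rfl, Binv_diag B Binv hBlt hBdiag hBinvLt hB2 0]
    · show (if (0:ℕ) = k then (1:ℂ) else 0) = Binv 0 k
      rw [if_neg (by omega), hBinvLt 0 k hk]
  | succ j ih =>
    intro k
    show matMul _ _ 0 k = _
    rw [matMul]
    have h1 : ∀ l, matPow (matMul (matMul B Xmat) Binv) j 0 l *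
        matMul (matMul B Xmat) Binv l k = Binv j l * matMul (matMul B Xmat) Binv l k := by
      intro l; rw [ih]
    rw [tsum_congr h1, tsum_eq_range _ (j + 1)]
    · have h2 : ∀ l ∈ Finset.range (j + 1),
          Binv j l * matMul (matMul B Xmat) Binv l k =
          ∑ i ∈ Finset.range (j + 1), Binv j l * B l i * Binv (i + 1) k := by
        intro l hl
        rw [Finset.mem_range] at hl
        rw [K_entry B Binv hBlt, Finset.mul_sum]
        rw [← Finset.sum_subset (Finset.range_subset_range.mpr (by omega : l + 1 ≤ j + 1))]
        · exact Finset.sum_congr rfl fun i _ => by ring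
        · intro i _ hi
          rw [Finset.mem_range, not_lt] at hi
          rw [hBlt l i (by omega)]; ring
      rw [Finset.sum_congr rfl h2, Finset.sum_comm]
      have h3 : ∀ i ∈ Finset.range (j + 1),
          ∑ l ∈ Finset.range (j + 1), Binv j l * B l i * Binv (i + 1) k =
          Imat j i * Binv (i + 1) k := by
        intro i _
        rw [← Finset.sum_mul, BinvB_fin B Binv hBinvLt hB2 j i (j + 1) (by omega)]
      rw [Finset.sum_congr rfl h3, Finset.sum_eq_single j]
      · simp [Imat]
      · intro b _ hb; simp [Imat, Ne.symm hb]
      · intro hcon; exact absurd (Finset.mem_range.mpr (by omega)) hcon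
    · intro n hn
      rw [hBinvLt j n (by omega), zero_mul]

lemma evalRow (A B Binv : ℕ → ℕ → ℂ)
    (hAlt : ∀ k j : ℕ, j > k → A k j = 0) (hAdiag : ∀ k, A k k = 1)
    (hBlt : ∀ k j : ℕ, j > k → B k j = 0) (hBdiag : ∀ k, B k k = 1)
    (hBinvLt : ∀ k j : ℕ, j > k → Binv k j = 0)
    (hB2 : matMul Binv B = Imat) (m k : ℕ) :
    matPolyEval (rowPoly A m) (matMul (matMul B Xmat) Binv) 0 k =
      ∑ j ∈ Finset.range (m + 1), A m j * Binv j k := by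
  unfold matPolyEval
  rw [natDegree_rowPoly A hAlt hAdiag]
  refine Finset.sum_congr rfl fun j _ => ?_
  rw [coeff_rowPoly A hAlt, row0_pow B Binv hBlt hBdiag hBinvLt hB2]

end AuxLemmas

lemma connection (A B Binv : ℕ → ℕ → ℂ)
    (hAlt : ∀ k j : ℕ, j > k → A k j = 0) (hAdiag : ∀ k, A k k = 1)
    (hBlt : ∀ k j : ℕ, j > k → B k j = 0) (hBdiag : ∀ k, B k k = 1)
    (hBinvLt : ∀ k j : ℕ, j > k → Binv k j = 0)
    (hB2 : matMul Binv B = Imat) (m : ℕ) :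
    rowPoly A m = ∑ k ∈ Finset.range (m + 1),
      Polynomial.C (matPolyEval (rowPoly A m) (matMul (matMul B Xmat) Binv) 0 k) *
        rowPoly B k := by
  ext i
  rw [coeff_rowPoly A hAlt, Polynomial.finset_sum_coeff]
  have h1 : ∀ k ∈ Finset.range (m + 1),
      (Polynomial.C (matPolyEval (rowPoly A m) (matMul (matMul B Xmat) Binv) 0 k) *
        rowPoly B k).coeff i =
      ∑ j ∈ Finset.range (m + 1), A m j * Binv j k * B k i := by
    intro k _
    rw [Polynomial.coeff_C_mul, coeff_rowPoly B hBlt,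
      evalRow A B Binv hAlt hAdiag hBlt hBdiag hBinvLt hB2, Finset.sum_mul]
  rw [Finset.sum_congr rfl h1, Finset.sum_comm]
  have h2 : ∀ j ∈ Finset.range (m + 1),
      ∑ k ∈ Finset.range (m + 1), A m j * Binv j k * B k i = A m j * Imat j i := by
    intro j hj
    rw [Finset.mem_range] at hj
    have : ∀ k ∈ Finset.range (m + 1),
        A m j * Binv j k * B k i = A m j * (Binv j k * B k i) := fun k _ => by ring
    rw [Finset.sum_congr rfl this, ← Finset.mul_sum,
      BinvB_fin B Binv hBinvLt hB2 j i (m + 1) (by omega)]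
  rw [Finset.sum_congr rfl h2]
  by_cases hi : i < m + 1
  · rw [Finset.sum_eq_single i]
    · simp [Imat]
    · intro b _ hb; simp [Imat, hb]
    · intro hcon; exact absurd (Finset.mem_range.mpr hi) hcon
  · rw [Finset.sum_eq_zero, hAlt m i (by omega)]
    intro b hb
    rw [Finset.mem_range] at hb
    have : Imat b i = 0 := by simp only [Imat, if_neg (by omega : ¬ b = i)]
    rw [this, mul_zero]

lemma inverse_rel (P U Pinv Uinv : ℕ → ℕ → ℂ)
    (hPlt : ∀ k j : ℕ, j > k → P k j = 0) (hPdiag : ∀ k, P k k = 1)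
    (hUlt : ∀ k j : ℕ, j > k → U k j = 0) (hUdiag : ∀ k, U k k = 1)
    (hPinvLt : ∀ k j : ℕ, j > k → Pinv k j = 0)
    (hUinvLt : ∀ k j : ℕ, j > k → Uinv k j = 0)
    (hP1 : matMul P Pinv = Imat) (hP2 : matMul Pinv P = Imat)
    (hU2 : matMul Uinv U = Imat) (m n : ℕ) :
    ∑ k ∈ Finset.range (m + n + 1),
      matPolyEval (rowPoly P m) (matMul (matMul U Xmat) Uinv) 0 k *
        matPolyEval (rowPoly U k) (matMul (matMul P Xmat) Pinv) 0 n =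
      if m = n then 1 else 0 := by
  set N := m + n + 1 with hN
  have key : ∀ k ∈ Finset.range N,
      matPolyEval (rowPoly P m) (matMul (matMul U Xmat) Uinv) 0 k *
        matPolyEval (rowPoly U k) (matMul (matMul P Xmat) Pinv) 0 n =
      ∑ j ∈ Finset.range N, ∑ i ∈ Finset.range N,
        P m j * Uinv j k * (U k i * Pinv i n) := by
    intro k hk
    rw [Finset.mem_range] at hk
    rw [evalRow P U Uinv hPlt hPdiag hUlt hUdiag hUinvLt hU2,
      evalRow U P Pinv hUlt hUdiag hPlt hPdiag hPinvLt hP2]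
    rw [Finset.sum_subset (Finset.range_subset_range.mpr (by omega : m + 1 ≤ N))
        (fun j _ hj => by
          rw [Finset.mem_range, not_lt] at hj
          rw [hPlt m j (by omega), zero_mul]),
      Finset.sum_subset (Finset.range_subset_range.mpr (by omega : k + 1 ≤ N))
        (fun i _ hi => by
          rw [Finset.mem_range, not_lt] at hi
          rw [hUlt k i (by omega), zero_mul]),
      Finset.sum_mul_sum]
  rw [Finset.sum_congr rfl key, Finset.sum_comm]
  have h2 : ∀ j ∈ Finset.range N,
      ∑ k ∈ Finset.range N, ∑ i ∈ Finset.range N,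
        P m j * Uinv j k * (U k i * Pinv i n) = P m j * Pinv j n := by
    intro j hj
    rw [Finset.mem_range] at hj
    rw [Finset.sum_comm]
    have h3 : ∀ i ∈ Finset.range N,
        ∑ k ∈ Finset.range N, P m j * Uinv j k * (U k i * Pinv i n) =
        P m j * Pinv i n * Imat j i := by
      intro i _
      have : ∀ k ∈ Finset.range N,
          P m j * Uinv j k * (U k i * Pinv i n) =
          P m j * Pinv i n * (Uinv j k * U k i) := fun k _ => by ring
      rw [Finset.sum_congr rfl this, ← Finset.mul_sum,
        BinvB_fin U Uinv hUinvLt hU2 j i N hj]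
    rw [Finset.sum_congr rfl h3, Finset.sum_eq_single j]
    · simp [Imat]
    · intro b _ hb
      have : Imat j b = 0 := by simp only [Imat, if_neg (Ne.symm hb)]
      rw [this, mul_zero]
    · intro hcon; exact absurd (Finset.mem_range.mpr hj) hcon
  rw [Finset.sum_congr rfl h2,
    BinvB_fin Pinv P hPlt hP1 m n N (by omega)]
  rfl

theorem stmt18 (P U Pinv Uinv : ℕ → ℕ → ℂ)
    (hPlt : ∀ k j : ℕ, j > k → P k j = 0) (hPdiag : ∀ k, P k k = 1)
    (hUlt : ∀ k j : ℕ, j > k → U k j = 0) (hUdiag : ∀ k, U k k = 1)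
    (hPinvLt : ∀ k j : ℕ, j > k → Pinv k j = 0)
    (hUinvLt : ∀ k j : ℕ, j > k → Uinv k j = 0)
    (hP1 : matMul P Pinv = Imat) (hP2 : matMul Pinv P = Imat)
    (hU1 : matMul U Uinv = Imat) (hU2 : matMul Uinv U = Imat) :
    let H := matMul (matMul P Xmat) Pinv
    let K := matMul (matMul U Xmat) Uinv
    (∀ m : ℕ, rowPoly P m =
      ∑ k ∈ Finset.range (m + 1),
        Polynomial.C (matPolyEval (rowPoly P m) K 0 k) * rowPoly U k) ∧
    (∀ m : ℕ, rowPoly U m =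
      ∑ k ∈ Finset.range (m + 1),
        Polynomial.C (matPolyEval (rowPoly U m) H 0 k) * rowPoly P k) ∧
    (∀ m n : ℕ,
      ∑ k ∈ Finset.range (m + n + 1),
        matPolyEval (rowPoly P m) K 0 k * matPolyEval (rowPoly U k) H 0 n =
      if m = n then 1 else 0) := by
  intro H K
  exact ⟨fun m => connection P U Uinv hPlt hPdiag hUlt hUdiag hUinvLt hU2 m,
    fun m => connection U P Pinv hUlt hUdiag hPlt hPdiag hPinvLt hP2 m,
    fun m n => inverse_rel P U Pinv Uinv hPlt hPdiag hUlt hUdiag hPinvLt hUinvLt hP1 hP2 hU2 m n⟩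
end
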